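/- There exists an MC-CAC(3, 5, 3) of size 8, and every MC-CAC(3, 5, 3) has size at most 8; hence A(3, 5, 3) = 8. -/

import Mathlib

/-- A multichannel conflict-avoiding code MC-CAC(M, L, w): a set of scheduling
patterns (supports of `M × L` zero-one arrays) of weight `w` such that every
cyclic-shift cross-correlation between two distinct codewords is at most 1. -/
def IsMCCAC (M L w : ℕ) (C : Finset (Finset (Fin M × ZMod L))) : Prop :=
  (∀ S ∈ C, S.card = w) ∧
  (∀ S ∈ C, ∀ T ∈ C, S ≠ T → ∀ τ : ZMod L,
    (S.filter fun p => (p.1, p.2 + τ) ∈ T).card ≤ 1)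

/-- Description of the 24 labels: either a base pair (a pair type up to
cyclic shift) or a full channel. -/
def mcDesc : Fin 24 → ((Fin 3 × ZMod 5) × (Fin 3 × ZMod 5)) ⊕ (Fin 3) :=
  ![ .inl ((0,0),(0,1)), .inl ((0,0),(0,2)),
     .inl ((1,0),(1,1)), .inl ((1,0),(1,2)),
     .inl ((2,0),(2,1)), .inl ((2,0),(2,2)),
     .inl ((0,0),(1,0)), .inl ((0,0),(1,1)), .inl ((0,0),(1,2)), .inl ((0,0),(1,3)), .inl ((0,0),(1,4)),
     .inl ((0,0),(2,0)), .inl ((0,0),(2,1)), .inl ((0,0),(2,2)), .inl ((0,0),(2,3)), .inl ((0,0),(2,4)),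
     .inl ((1,0),(2,0)), .inl ((1,0),(2,1)), .inl ((1,0),(2,2)), .inl ((1,0),(2,3)), .inl ((1,0),(2,4)),
     .inr 0, .inr 1, .inr 2 ]

/-- A codeword `S` "hits" the label `ℓ`. -/
def mcHit (ℓ : Fin 24) (S : Finset (Fin 3 × ZMod 5)) : Prop :=
  Sum.elim
    (fun pq : (Fin 3 × ZMod 5) × (Fin 3 × ZMod 5) =>
      pq.1 ≠ pq.2 ∧ ∃ σ : ZMod 5, (pq.1.1, pq.1.2 + σ) ∈ S ∧ (pq.2.1, pq.2.2 + σ) ∈ S)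
    (fun i => S.card = 3 ∧ ∀ p ∈ S, p.1 = i) (mcDesc ℓ)

noncomputable instance (S : Finset (Fin 3 × ZMod 5)) : DecidablePred (fun ℓ => mcHit ℓ S) := by
  intro ℓ
  unfold mcHit
  rcases h : mcDesc ℓ with pq | i <;>
    simp only [h, Sum.elim_inl, Sum.elim_inr] <;> infer_instance

open Fin.NatCast in
/-- label-building helpers -/
def crossIdx (i j : Fin 3) (δ : ZMod 5) : Fin 24 :=
  ((if i = 0 then (if j = 1 then 6 else 11) else 16) + δ.val : ℕ)

open Fin.NatCast in
def sameIdx (i : Fin 3) (b : Bool) : Fin 24 := ((2 * i.val + if b then 0 else 1 : ℕ))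

open Fin.NatCast in
def chanIdx (i : Fin 3) : Fin 24 := ((21 + i.val : ℕ))

def diffClass (d : ZMod 5) : Bool := if d = 1 ∨ d = 4 then true else false

lemma descCross : ∀ (i j : Fin 3) (δ : ZMod 5), i < j →
    mcDesc (crossIdx i j δ) = Sum.inl ((i, 0), (j, δ)) := by decide

lemma descSame : ∀ (i : Fin 3) (b : Bool),
    mcDesc (sameIdx i b) = Sum.inl ((i, 0), (i, if b then 1 else 2)) := by decide

lemma descChan : ∀ i : Fin 3, mcDesc (chanIdx i) = Sum.inr i := by decide

lemma crossInj : ∀ (i j i' j' : Fin 3) (δ δ' : ZMod 5), i < j → i' < j' →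
    crossIdx i j δ = crossIdx i' j' δ' → i = i' ∧ j = j' ∧ δ = δ' := by decide

lemma sameNeCross : ∀ (i : Fin 3) (b : Bool) (i' j' : Fin 3) (δ : ZMod 5), i' < j' →
    sameIdx i b ≠ crossIdx i' j' δ := by decide

lemma sameNeChan : ∀ (i : Fin 3) (b : Bool) (i' : Fin 3), sameIdx i b ≠ chanIdx i' := by decide

lemma chanNeCross : ∀ (i : Fin 3) (i' j' : Fin 3) (δ : ZMod 5), i' < j' →
    chanIdx i ≠ crossIdx i' j' δ := by decide

lemma sameInj : ∀ (i : Fin 3) (b b' : Bool), b ≠ b' → sameIdx i b ≠ sameIdx i b' := by decide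

lemma z5cases : ∀ d : ZMod 5, d ≠ 0 → d = 1 ∨ d = 2 ∨ d = 3 ∨ d = 4 := by decide

lemma z5class : ∀ a b c : ZMod 5, a ≠ b → a ≠ c → b ≠ c →
    ¬(diffClass (b - a) = diffClass (c - a) ∧ diffClass (c - a) = diffClass (c - b)) := by decide

lemma z5adj : ∀ a b c : ZMod 5, a ≠ b → a ≠ c → b ≠ c →
    ∃ u : ZMod 5, (u = a ∨ u = b ∨ u = c) ∧ (u + 1 = a ∨ u + 1 = b ∨ u + 1 = c) := by decide

lemma z5ne : ∀ u : ZMod 5, u ≠ u + 1 := by decide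

lemma hit_cross {S : Finset (Fin 3 × ZMod 5)} {x y : Fin 3 × ZMod 5}
    (hx : x ∈ S) (hy : y ∈ S) (hlt : x.1 < y.1) :
    mcHit (crossIdx x.1 y.1 (y.2 - x.2)) S := by
  unfold mcHit
  rw [descCross _ _ _ hlt]
  simp only [Sum.elim_inl]
  refine ⟨fun h => absurd (congrArg Prod.fst h) (ne_of_lt hlt), x.2, ?_, ?_⟩
  · simpa using hx
  · simpa [sub_add_cancel] using hy

lemma hit_same {S : Finset (Fin 3 × ZMod 5)} {x y : Fin 3 × ZMod 5}
    (hx : x ∈ S) (hy : y ∈ S) (hch : x.1 = y.1) (h2 : x.2 ≠ y.2) :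
    mcHit (sameIdx x.1 (diffClass (y.2 - x.2))) S := by
  have hd0 : y.2 - x.2 ≠ 0 := sub_ne_zero.mpr h2.symm
  rcases z5cases _ hd0 with h | h | h | h
  · rw [h, show diffClass (1 : ZMod 5) = true by decide]
    unfold mcHit
    rw [descSame]
    simp only [Sum.elim_inl, if_true]
    refine ⟨fun h' => ?_, x.2, by simpa using hx, ?_⟩
    · have e : (0 : ZMod 5) = 1 := congrArg Prod.snd h'
      exact absurd e (by decide)
    · have e : ((x.1 : Fin 3), (1 : ZMod 5) + x.2) = y :=
        Prod.ext hch (by rw [← h]; ring)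
      rw [e]; exact hy
  · rw [h, show diffClass (2 : ZMod 5) = false by decide]
    unfold mcHit
    rw [descSame]
    simp only [Sum.elim_inl, if_false, Bool.false_eq_true]
    refine ⟨fun h' => ?_, x.2, by simpa using hx, ?_⟩
    · have e : (0 : ZMod 5) = 2 := congrArg Prod.snd h'
      exact absurd e (by decide)
    · have e : ((x.1 : Fin 3), (2 : ZMod 5) + x.2) = y :=
        Prod.ext hch (by rw [← h]; ring)
      rw [e]; exact hy
  · rw [h, show diffClass (3 : ZMod 5) = false by decide]
    unfold mcHit
    rw [descSame]
    simp only [Sum.elim_inl, if_false, Bool.false_eq_true]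
    refine ⟨fun h' => ?_, y.2, ?_, ?_⟩
    · have e : (0 : ZMod 5) = 2 := congrArg Prod.snd h'
      exact absurd e (by decide)
    · have e : ((x.1 : Fin 3), (0 : ZMod 5) + y.2) = y := Prod.ext hch (zero_add _)
      rw [e]; exact hy
    · have hy2 : y.2 = 3 + x.2 := by rw [← h]; ring
      have e : ((x.1 : Fin 3), (2 : ZMod 5) + y.2) = x := by
        refine Prod.ext rfl ?_
        show (2 : ZMod 5) + y.2 = x.2
        rw [hy2, ← add_assoc, show (2 : ZMod 5) + 3 = 0 by decide, zero_add]
      rw [e]; exact hx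
  · rw [h, show diffClass (4 : ZMod 5) = true by decide]
    unfold mcHit
    rw [descSame]
    simp only [Sum.elim_inl, if_true]
    refine ⟨fun h' => ?_, y.2, ?_, ?_⟩
    · have e : (0 : ZMod 5) = 1 := congrArg Prod.snd h'
      exact absurd e (by decide)
    · have e : ((x.1 : Fin 3), (0 : ZMod 5) + y.2) = y := Prod.ext hch (zero_add _)
      rw [e]; exact hy
    · have hy2 : y.2 = 4 + x.2 := by rw [← h]; ring
      have e : ((x.1 : Fin 3), (1 : ZMod 5) + y.2) = x := by
        refine Prod.ext rfl ?_
        show (1 : ZMod 5) + y.2 = x.2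
        rw [hy2, ← add_assoc, show (1 : ZMod 5) + 4 = 0 by decide, zero_add]
      rw [e]; exact hx

lemma three_le {S : Finset (Fin 3 × ZMod 5)} (ℓ1 ℓ2 ℓ3 : Fin 24)
    (h12 : ℓ1 ≠ ℓ2) (h13 : ℓ1 ≠ ℓ3) (h23 : ℓ2 ≠ ℓ3)
    (H1 : mcHit ℓ1 S) (H2 : mcHit ℓ2 S) (H3 : mcHit ℓ3 S) :
    3 ≤ (Finset.univ.filter (fun ℓ : Fin 24 => mcHit ℓ S)).card := by
  have hsub : ({ℓ1, ℓ2, ℓ3} : Finset (Fin 24)) ⊆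
      Finset.univ.filter (fun ℓ : Fin 24 => mcHit ℓ S) := by
    intro ℓ hℓ
    simp only [Finset.mem_insert, Finset.mem_singleton] at hℓ
    rcases hℓ with rfl | rfl | rfl <;>
      simp only [Finset.mem_filter, Finset.mem_univ, true_and] <;> assumption
  have hcard : ({ℓ1, ℓ2, ℓ3} : Finset (Fin 24)).card = 3 := by
    rw [Finset.card_insert_of_notMem (by simp [h12, h13]),
        Finset.card_insert_of_notMem (by simp [h23]), Finset.card_singleton]
  calc (3 : ℕ) = ({ℓ1, ℓ2, ℓ3} : Finset (Fin 24)).card := hcard.symm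
    _ ≤ _ := Finset.card_le_card hsub

lemma coverB {S : Finset (Fin 3 × ZMod 5)} {x y z : Fin 3 × ZMod 5}
    (hx : x ∈ S) (hy : y ∈ S) (hz : z ∈ S)
    (hch : x.1 = y.1) (h2 : x.2 ≠ y.2) (hzx : z.1 ≠ x.1) :
    3 ≤ (Finset.univ.filter (fun ℓ : Fin 24 => mcHit ℓ S)).card := by
  have Hsame := hit_same hx hy hch h2
  rcases hzx.lt_or_gt with hlt | hlt
  · -- z.1 < x.1
    have Hc1 := hit_cross hz hx hlt
    have Hc2' := hit_cross hz hy (hch ▸ hlt)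
    rw [← hch] at Hc2'
    refine three_le _ _ _ ?_ ?_ ?_ Hsame Hc1 Hc2'
    · exact sameNeCross _ _ _ _ _ hlt
    · exact sameNeCross _ _ _ _ _ hlt
    · intro h
      obtain ⟨-, -, e⟩ := crossInj _ _ _ _ _ _ hlt hlt h
      exact h2 (by have := sub_left_inj.mp e; exact this)
  · -- x.1 < z.1
    have Hc1 := hit_cross hx hz hlt
    have Hc2' := hit_cross hy hz (hch ▸ hlt)
    rw [← hch] at Hc2'
    refine three_le _ _ _ ?_ ?_ ?_ Hsame Hc1 Hc2'
    · exact sameNeCross _ _ _ _ _ hlt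
    · exact sameNeCross _ _ _ _ _ hlt
    · intro h
      obtain ⟨-, -, e⟩ := crossInj _ _ _ _ _ _ hlt hlt h
      exact h2 (sub_right_inj.mp e)

lemma coverC {S : Finset (Fin 3 × ZMod 5)} {x y z : Fin 3 × ZMod 5}
    (hx : x ∈ S) (hy : y ∈ S) (hz : z ∈ S)
    (h1 : x.1 < y.1) (h2 : y.1 < z.1) :
    3 ≤ (Finset.univ.filter (fun ℓ : Fin 24 => mcHit ℓ S)).card := by
  have h3 : x.1 < z.1 := h1.trans h2
  refine three_le _ _ _ ?_ ?_ ?_ (hit_cross hx hy h1) (hit_cross hx hz h3)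
    (hit_cross hy hz h2)
  · intro h
    obtain ⟨-, e, -⟩ := crossInj _ _ _ _ _ _ h1 h3 h
    exact absurd e (ne_of_lt h2)
  · intro h
    obtain ⟨e, -, -⟩ := crossInj _ _ _ _ _ _ h1 h2 h
    exact absurd e (ne_of_lt h1)
  · intro h
    obtain ⟨e, -, -⟩ := crossInj _ _ _ _ _ _ h3 h2 h
    exact absurd e (ne_of_lt h1)

lemma hit_chan {p q r : Fin 3 × ZMod 5} (hpq : p ≠ q) (hpr : p ≠ r) (hqr : q ≠ r)
    (e1 : p.1 = q.1) (e2 : p.1 = r.1) :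
    mcHit (chanIdx p.1) ({p, q, r} : Finset (Fin 3 × ZMod 5)) := by
  unfold mcHit
  rw [descChan]
  simp only [Sum.elim_inr]
  refine ⟨Finset.card_eq_three.mpr ⟨p, q, r, hpq, hpr, hqr, rfl⟩, ?_⟩
  intro a ha
  simp only [Finset.mem_insert, Finset.mem_singleton] at ha
  rcases ha with rfl | rfl | rfl
  · rfl
  · exact e1.symm
  · exact e2.symm

lemma mcCover (S : Finset (Fin 3 × ZMod 5)) (hS : S.card = 3) :
    3 ≤ (Finset.univ.filter (fun ℓ : Fin 24 => mcHit ℓ S)).card := by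
  obtain ⟨p, q, r, hpq, hpr, hqr, rfl⟩ := Finset.card_eq_three.mp hS
  have hp : p ∈ ({p, q, r} : Finset (Fin 3 × ZMod 5)) := by simp
  have hq : q ∈ ({p, q, r} : Finset (Fin 3 × ZMod 5)) := by simp
  have hr : r ∈ ({p, q, r} : Finset (Fin 3 × ZMod 5)) := by simp
  by_cases e1 : p.1 = q.1
  · by_cases e2 : p.1 = r.1
    · -- all in one channel
      have d12 : p.2 ≠ q.2 := fun h => hpq (Prod.ext e1 h)
      have d13 : p.2 ≠ r.2 := fun h => hpr (Prod.ext e2 h)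
      have d23 : q.2 ≠ r.2 := fun h => hqr (Prod.ext (e1.symm.trans e2) h)
      have Hchan := hit_chan hpq hpr hqr e1 e2
      have H1 := hit_same hp hq e1 d12
      have H2 := hit_same hp hr e2 d13
      have H3' := hit_same hq hr (e1.symm.trans e2) d23
      rw [show q.1 = p.1 from e1.symm] at H3'
      have hnotall := z5class p.2 q.2 r.2 d12 d13 d23
      by_cases hcc : diffClass (q.2 - p.2) = diffClass (r.2 - p.2)
      · have hcc2 : diffClass (r.2 - p.2) ≠ diffClass (r.2 - q.2) :=
          fun h => hnotall ⟨hcc, h⟩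
        refine three_le _ _ _ ?_ ?_ ?_ H2 H3' Hchan
        · exact sameInj _ _ _ hcc2
        · exact sameNeChan _ _ _
        · exact sameNeChan _ _ _
      · refine three_le _ _ _ ?_ ?_ ?_ H1 H2 Hchan
        · exact sameInj _ _ _ hcc
        · exact sameNeChan _ _ _
        · exact sameNeChan _ _ _
    · -- p,q same channel, r elsewhere
      have d12 : p.2 ≠ q.2 := fun h => hpq (Prod.ext e1 h)
      exact coverB hp hq hr e1 d12 (fun h => e2 h.symm)
  · by_cases e2 : p.1 = r.1
    · have d13 : p.2 ≠ r.2 := fun h => hpr (Prod.ext e2 h)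
      exact coverB hp hr hq e2 d13 (fun h => e1 h.symm)
    · by_cases e3 : q.1 = r.1
      · have d23 : q.2 ≠ r.2 := fun h => hqr (Prod.ext e3 h)
        exact coverB hq hr hp e3 d23 (fun h => e1 h)
      · -- all channels distinct
        rcases Ne.lt_or_gt e1 with hpq1 | hqp1 <;>
          rcases Ne.lt_or_gt e2 with hpr1 | hrp1 <;>
            rcases Ne.lt_or_gt e3 with hqr1 | hrq1
        · exact coverC hp hq hr hpq1 hqr1
        · exact coverC hp hr hq hpr1 hrq1
        · exact absurd (lt_trans (lt_trans hrp1 hpq1) hqr1) (lt_irrefl _)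
        · exact coverC hr hp hq hrp1 hpq1
        · exact coverC hq hp hr hqp1 hpr1
        · exact absurd (lt_trans (lt_trans hpr1 hrq1) hqp1) (lt_irrefl _)
        · exact coverC hq hr hp hqr1 hrp1
        · exact coverC hr hq hp hrq1 hqp1

/-- Two distinct codewords of a code both hitting a label would conflict. -/
lemma mcUniq (C : Finset (Finset (Fin 3 × ZMod 5))) (hC : IsMCCAC 3 5 3 C) (ℓ : Fin 24) :
    (C.filter (fun S => mcHit ℓ S)).card ≤ 1 := by
  apply Finset.card_le_one.mpr
  intro S hS T hT
  by_contra hne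
  rw [Finset.mem_filter] at hS hT
  obtain ⟨hSC, hSh⟩ := hS
  obtain ⟨hTC, hTh⟩ := hT
  unfold mcHit at hSh hTh
  have hfilter := hC.2 S hSC T hTC hne
  have key : ∃ (x y : Fin 3 × ZMod 5) (τ : ZMod 5), x ≠ y ∧ x ∈ S ∧ y ∈ S ∧
      (x.1, x.2 + τ) ∈ T ∧ (y.1, y.2 + τ) ∈ T := by
    rcases h : mcDesc ℓ with ⟨p, q⟩ | i <;> rw [h] at hSh hTh <;>
      simp only [Sum.elim_inl, Sum.elim_inr] at hSh hTh
    · obtain ⟨hpq, σ, h1, h2⟩ := hSh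
      obtain ⟨-, ρ, h3, h4⟩ := hTh
      refine ⟨(p.1, p.2 + σ), (q.1, q.2 + σ), ρ - σ, ?_, h1, h2, ?_, ?_⟩
      · intro hx
        apply hpq
        obtain ⟨e1, e2⟩ := Prod.mk.inj hx
        exact Prod.ext e1 (add_right_cancel e2)
      · have : p.2 + σ + (ρ - σ) = p.2 + ρ := by ring
        rw [this]; exact h3
      · have : q.2 + σ + (ρ - σ) = q.2 + ρ := by ring
        rw [this]; exact h4
    · obtain ⟨hS3, hSi⟩ := hSh
      obtain ⟨hT3, hTi⟩ := hTh
      obtain ⟨x, y, z, hxy, hxz, hyz, hSe⟩ := Finset.card_eq_three.mp hS3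
      have hxS : x ∈ S := hSe ▸ by simp
      have hyS : y ∈ S := hSe ▸ by simp
      have hzS : z ∈ S := hSe ▸ by simp
      have hx1 : x.1 = i := hSi x hxS
      have hy1 : y.1 = i := hSi y hyS
      have hz1 : z.1 = i := hSi z hzS
      have h2xy : x.2 ≠ y.2 := fun h => hxy (Prod.ext (hx1.trans hy1.symm) h)
      have h2xz : x.2 ≠ z.2 := fun h => hxz (Prod.ext (hx1.trans hz1.symm) h)
      have h2yz : y.2 ≠ z.2 := fun h => hyz (Prod.ext (hy1.trans hz1.symm) h)
      obtain ⟨u, hu, hu1⟩ := z5adj x.2 y.2 z.2 h2xy h2xz h2yz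
      have memu : (i, u) ∈ S := by
        rcases hu with h' | h' | h'
        · rw [show ((i, u) : Fin 3 × ZMod 5) = x from Prod.ext hx1.symm h']; exact hxS
        · rw [show ((i, u) : Fin 3 × ZMod 5) = y from Prod.ext hy1.symm h']; exact hyS
        · rw [show ((i, u) : Fin 3 × ZMod 5) = z from Prod.ext hz1.symm h']; exact hzS
      have memu1 : (i, u + 1) ∈ S := by
        rcases hu1 with h' | h' | h'
        · rw [show ((i, u + 1) : Fin 3 × ZMod 5) = x from Prod.ext hx1.symm h']; exact hxS
        · rw [show ((i, u + 1) : Fin 3 × ZMod 5) = y from Prod.ext hy1.symm h']; exact hyS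
        · rw [show ((i, u + 1) : Fin 3 × ZMod 5) = z from Prod.ext hz1.symm h']; exact hzS
      obtain ⟨a, b, c, hab, hac, hbc, hTe⟩ := Finset.card_eq_three.mp hT3
      have haT : a ∈ T := hTe ▸ by simp
      have hbT : b ∈ T := hTe ▸ by simp
      have hcT : c ∈ T := hTe ▸ by simp
      have ha1 : a.1 = i := hTi a haT
      have hb1 : b.1 = i := hTi b hbT
      have hc1 : c.1 = i := hTi c hcT
      have h2ab : a.2 ≠ b.2 := fun h => hab (Prod.ext (ha1.trans hb1.symm) h)
      have h2ac : a.2 ≠ c.2 := fun h => hac (Prod.ext (ha1.trans hc1.symm) h)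
      have h2bc : b.2 ≠ c.2 := fun h => hbc (Prod.ext (hb1.trans hc1.symm) h)
      obtain ⟨w, hw, hw1⟩ := z5adj a.2 b.2 c.2 h2ab h2ac h2bc
      have memw : (i, w) ∈ T := by
        rcases hw with h' | h' | h'
        · rw [show ((i, w) : Fin 3 × ZMod 5) = a from Prod.ext ha1.symm h']; exact haT
        · rw [show ((i, w) : Fin 3 × ZMod 5) = b from Prod.ext hb1.symm h']; exact hbT
        · rw [show ((i, w) : Fin 3 × ZMod 5) = c from Prod.ext hc1.symm h']; exact hcT
      have memw1 : (i, w + 1) ∈ T := by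
        rcases hw1 with h' | h' | h'
        · rw [show ((i, w + 1) : Fin 3 × ZMod 5) = a from Prod.ext ha1.symm h']; exact haT
        · rw [show ((i, w + 1) : Fin 3 × ZMod 5) = b from Prod.ext hb1.symm h']; exact hbT
        · rw [show ((i, w + 1) : Fin 3 × ZMod 5) = c from Prod.ext hc1.symm h']; exact hcT
      refine ⟨(i, u), (i, u + 1), w - u, ?_, memu, memu1, ?_, ?_⟩
      · intro hx
        exact z5ne u (Prod.mk.inj hx).2
      · have : u + (w - u) = w := by ring
        rw [this]; exact memw
      · have : u + 1 + (w - u) = w + 1 := by ring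
        rw [this]; exact memw1
  obtain ⟨x, y, τ, hxy, hxS, hyS, hxT, hyT⟩ := key
  have h2 : 1 < (S.filter fun p => (p.1, p.2 + τ) ∈ T).card :=
    Finset.one_lt_card.mpr
      ⟨x, Finset.mem_filter.mpr ⟨hxS, hxT⟩, y, Finset.mem_filter.mpr ⟨hyS, hyT⟩, hxy⟩
  exact absurd (hfilter τ) (by omega)

abbrev mcW : List (Finset (Fin 3 × ZMod 5)) :=
  [ {(0,0),(0,1),(0,2)}, {(1,0),(1,1),(1,2)}, {(2,0),(2,1),(2,2)},
    {(0,0),(1,0),(2,0)}, {(0,0),(1,1),(2,2)}, {(0,0),(1,2),(2,4)},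
    {(0,0),(1,3),(2,1)}, {(0,0),(1,4),(2,3)} ]

theorem stmt15 :
    (∃ C : Finset (Finset (Fin 3 × ZMod 5)), IsMCCAC 3 5 3 C ∧ C.card = 8) ∧
    (∀ C : Finset (Finset (Fin 3 × ZMod 5)), IsMCCAC 3 5 3 C → C.card ≤ 8) := by
  constructor
  · refine ⟨mcW.toFinset, ⟨?_, ?_⟩, ?_⟩
    · intro S hS
      rw [List.mem_toFinset] at hS
      fin_cases hS <;> decide
    · intro S hS T hT hne
      rw [List.mem_toFinset] at hS hT
      fin_cases hS <;> fin_cases hT <;>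
        first
          | exact absurd rfl hne
          | decide
    · decide
  · intro C hC
    have hcov : ∀ S ∈ C, 3 ≤ (Finset.univ.filter (fun ℓ : Fin 24 => mcHit ℓ S)).card :=
      fun S hS => mcCover S (hC.1 S hS)
    have key : 3 * C.card ≤ 24 := by
      calc 3 * C.card = ∑ _S ∈ C, 3 := by rw [Finset.sum_const, smul_eq_mul, mul_comm]
        _ ≤ ∑ S ∈ C, (Finset.univ.filter (fun ℓ : Fin 24 => mcHit ℓ S)).card :=
            Finset.sum_le_sum hcov
        _ = ∑ S ∈ C, ∑ ℓ : Fin 24, if mcHit ℓ S then 1 else 0 := by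
            refine Finset.sum_congr rfl fun S _ => ?_
            rw [Finset.card_filter]
        _ = ∑ ℓ : Fin 24, ∑ S ∈ C, if mcHit ℓ S then 1 else 0 := Finset.sum_comm
        _ = ∑ ℓ : Fin 24, (C.filter (fun S => mcHit ℓ S)).card := by
            refine Finset.sum_congr rfl fun ℓ _ => ?_
            rw [Finset.card_filter]
        _ ≤ ∑ _ℓ : Fin 24, 1 := Finset.sum_le_sum fun ℓ _ => mcUniq C hC ℓ
        _ = 24 := by simp
    omega
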